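/- With the notation of the previous lemma (λ₁ < ... < λₙ positive, Ψ positive on [λ₁, λₙ], γ, T, Θ as defined), equality Θ(Tp) = Θ(p) holds if and only if there exist two indices i₁ ≠ i₂ such that p⁽ⁱ⁾ = 0 for all i ∉ {i₁, i₂}, and in that case γ(Tp) + γ(p) = λ_{i₁} + λ_{i₂}. -/

import Mathlib

open Finset

noncomputable def gam {n : ℕ} (lam : Fin (n+1) → ℝ) (Psi : ℝ → ℝ) (p : Fin (n+1) → ℝ) : ℝ :=
  (∑ i, Psi (lam i) * lam i * p i) / (∑ i, Psi (lam i) * p i)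

noncomputable def Tmap {n : ℕ} (lam : Fin (n+1) → ℝ) (Psi : ℝ → ℝ) (p : Fin (n+1) → ℝ) :
    Fin (n+1) → ℝ :=
  fun i => (lam i - gam lam Psi p) ^ 2 * p i / ∑ j, (lam j - gam lam Psi p) ^ 2 * p j

noncomputable def Theta {n : ℕ} (lam : Fin (n+1) → ℝ) (Psi : ℝ → ℝ) (p : Fin (n+1) → ℝ) : ℝ :=
  (∑ i, Psi (lam i) * (lam i - gam lam Psi p) ^ 2 * p i) / (∑ i, Psi (lam i) * p i)

lemma two_point_alg (w1 w2 l1 l2 μ : ℝ)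
    (hμ : μ * (w1 + w2) = w1 * l1 + w2 * l2)
    (hS : w1 * (l1 - μ)^2 + w2 * (l2 - μ)^2 ≠ 0) :
    μ + (w1*l1*(l1-μ)^2 + w2*l2*(l2-μ)^2) / (w1*(l1-μ)^2 + w2*(l2-μ)^2) = l1 + l2 := by
  have h1 : w1*l1*(l1-μ)^2 + w2*l2*(l2-μ)^2
      = (l1 + l2 - μ) * (w1*(l1-μ)^2 + w2*(l2-μ)^2) := by
    linear_combination (l1 - μ) * (l2 - μ) * hμ
  rw [h1, mul_div_assoc, div_self hS, mul_one]; ring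

theorem theta_eq_iff_two_support {n : ℕ} (lam : Fin (n+1) → ℝ) (Psi : ℝ → ℝ)
    (p : Fin (n+1) → ℝ)
    (hmono : StrictMono lam) (hpos : 0 < lam 0)
    (hPsi : ∀ x ∈ Set.Icc (lam 0) (lam (Fin.last n)), 0 < Psi x)
    (hp : ∀ i, 0 ≤ p i) (hsum : ∑ i, p i = 1)
    (htwo : ∃ i j, i ≠ j ∧ 0 < p i ∧ 0 < p j) :
    (Theta lam Psi (Tmap lam Psi p) = Theta lam Psi p ↔
      ∃ i₁ i₂ : Fin (n+1), i₁ ≠ i₂ ∧ ∀ i, i ≠ i₁ → i ≠ i₂ → p i = 0) ∧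
    (Theta lam Psi (Tmap lam Psi p) = Theta lam Psi p →
      ∀ i₁ i₂ : Fin (n+1), i₁ ≠ i₂ → (∀ i, i ≠ i₁ → i ≠ i₂ → p i = 0) →
        gam lam Psi (Tmap lam Psi p) + gam lam Psi p = lam i₁ + lam i₂) := by
  classical
  have hPsi' : ∀ i : Fin (n+1), 0 < Psi (lam i) := fun i =>
    hPsi _ ⟨hmono.monotone (Fin.zero_le i), hmono.monotone (Fin.le_last i)⟩
  obtain ⟨a, b, hab, hpa, hpb⟩ := htwo
  have hlab : lam a ≠ lam b := fun h => hab (hmono.injective h)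
  set μ := gam lam Psi p with hμdef
  set A := ∑ i, Psi (lam i) * p i with hA
  set M := ∑ i, Psi (lam i) * lam i * p i with hM
  have hApos : 0 < A := by
    rw [hA]
    exact Finset.sum_pos' (fun i _ => mul_nonneg (hPsi' i).le (hp i))
      ⟨a, mem_univ a, mul_pos (hPsi' a) hpa⟩
  have hμval : μ = M / A := by rw [hμdef]; simp only [gam]; rfl
  set D := ∑ j, (lam j - μ)^2 * p j with hD
  have hex : ∃ i, 0 < p i ∧ lam i ≠ μ := by
    by_cases h : lam a = μ
    · exact ⟨b, hpb, by rw [← h]; exact Ne.symm hlab⟩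
    · exact ⟨a, hpa, h⟩
  obtain ⟨e, hpe, hle⟩ := hex
  have hle' : lam e - μ ≠ 0 := sub_ne_zero.mpr hle
  have hDpos : 0 < D := by
    rw [hD]
    exact Finset.sum_pos' (fun i _ => mul_nonneg (sq_nonneg _) (hp i))
      ⟨e, mem_univ e, mul_pos (by positivity) hpe⟩
  set S := ∑ i, Psi (lam i) * (lam i - μ)^2 * p i with hS
  have hSpos : 0 < S := by
    rw [hS]
    exact Finset.sum_pos' (fun i _ => mul_nonneg (mul_nonneg (hPsi' i).le (sq_nonneg _)) (hp i))
      ⟨e, mem_univ e, mul_pos (mul_pos (hPsi' e) (by positivity)) hpe⟩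
  set ν := gam lam Psi (Tmap lam Psi p) with hνdef
  set N := ∑ i, Psi (lam i) * lam i * (lam i - μ)^2 * p i with hN
  have hTmap : ∀ i, Tmap lam Psi p i = (lam i - μ)^2 * p i / D := by
    intro i; simp only [Tmap, ← hμdef, ← hD]
  have hden : ∑ i, Psi (lam i) * Tmap lam Psi p i = S / D := by
    rw [hS, Finset.sum_div]
    refine Finset.sum_congr rfl fun i _ => ?_
    rw [hTmap i]; ring
  have hνval : ν = N / S := by
    rw [hνdef]; simp only [gam]
    have h1 : ∑ i, Psi (lam i) * lam i * Tmap lam Psi p i = N / D := by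
      rw [hN, Finset.sum_div]
      refine Finset.sum_congr rfl fun i _ => ?_
      rw [hTmap i]; ring
    rw [h1, hden]
    field_simp
  set Q := ∑ i, Psi (lam i) * (lam i - ν)^2 * (lam i - μ)^2 * p i with hQ
  have hΘp : Theta lam Psi p = S / A := by
    simp only [Theta, ← hμdef, ← hA, ← hS]
  have hΘT : Theta lam Psi (Tmap lam Psi p) = Q / S := by
    simp only [Theta, ← hνdef]
    have h1 : ∑ i, Psi (lam i) * (lam i - ν)^2 * Tmap lam Psi p i = Q / D := by
      rw [hQ, Finset.sum_div]
      refine Finset.sum_congr rfl fun i _ => ?_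
      rw [hTmap i]; ring
    rw [h1, hden]
    field_simp
  have hZ : ∑ i, Psi (lam i) * (lam i - μ) * p i = 0 := by
    have h1 : ∑ i, Psi (lam i) * (lam i - μ) * p i = M - μ * A := by
      rw [hM, hA, Finset.mul_sum, ← Finset.sum_sub_distrib]
      exact Finset.sum_congr rfl fun i _ => by ring
    rw [h1, hμval]; field_simp; ring
  have hR : ∑ i, Psi (lam i) * ((lam i - μ) * (lam i - ν)) * p i = S := by
    have h1 : ∀ i ∈ univ, Psi (lam i) * ((lam i - μ) * (lam i - ν)) * p i
        = Psi (lam i) * (lam i - μ)^2 * p i + (μ - ν) * (Psi (lam i) * (lam i - μ) * p i) :=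
      fun i _ => by ring
    rw [Finset.sum_congr rfl h1, Finset.sum_add_distrib, ← Finset.mul_sum, hZ, mul_zero,
      add_zero, ← hS]
  set E := ∑ i, Psi (lam i) * ((lam i - μ) * (lam i - ν) - S / A)^2 * p i with hEdef
  have hE : E = S * (Theta lam Psi (Tmap lam Psi p) - Theta lam Psi p) := by
    rw [hΘT, hΘp]
    have h1 : ∀ i ∈ univ, Psi (lam i) * ((lam i - μ) * (lam i - ν) - S / A)^2 * p i
        = Psi (lam i) * (lam i - ν)^2 * (lam i - μ)^2 * p i
          - 2 * (S / A) * (Psi (lam i) * ((lam i - μ) * (lam i - ν)) * p i)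
          + (S / A)^2 * (Psi (lam i) * p i) := fun i _ => by ring
    rw [hEdef, Finset.sum_congr rfl h1, Finset.sum_add_distrib, Finset.sum_sub_distrib,
      ← Finset.mul_sum, ← Finset.mul_sum, hR, ← hQ, ← hA]
    field_simp
    ring
  have hEiff : (Theta lam Psi (Tmap lam Psi p) = Theta lam Psi p) ↔ E = 0 := by
    constructor
    · intro h; rw [hE, h, sub_self, mul_zero]
    · intro h; rw [hE] at h
      rcases mul_eq_zero.1 h with h' | h'
      · exact absurd h' hSpos.ne'
      · exact sub_eq_zero.1 h'
  have hEzero : E = 0 ↔ ∀ i, p i = 0 ∨ (lam i - μ) * (lam i - ν) = S / A := by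
    rw [hEdef, Finset.sum_eq_zero_iff_of_nonneg
      (fun i _ => mul_nonneg (mul_nonneg (hPsi' i).le (sq_nonneg _)) (hp i))]
    constructor
    · intro h i
      have h2 := h i (mem_univ i)
      rcases mul_eq_zero.1 h2 with h3 | h3
      · rcases mul_eq_zero.1 h3 with h4 | h4
        · exact absurd h4 (hPsi' i).ne'
        · right; have := pow_eq_zero_iff (n := 2) (by norm_num) |>.1 h4
          linarith [sub_eq_zero.1 this]
      · left; exact h3
    · intro h i _
      rcases h i with h3 | h3
      · rw [h3, mul_zero]
      · rw [h3, sub_self]; ring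
  -- the key two-point computation
  have key : ∀ i₁ i₂ : Fin (n+1), i₁ ≠ i₂ → (∀ i, i ≠ i₁ → i ≠ i₂ → p i = 0) →
      (μ + ν = lam i₁ + lam i₂) ∧ (∀ i, p i = 0 ∨ (lam i - μ) * (lam i - ν) = S / A) := by
    intro i₁ i₂ h12 hsupp
    have ha' : a = i₁ ∨ a = i₂ := by
      by_contra hc; push_neg at hc; exact absurd (hsupp a hc.1 hc.2) hpa.ne'
    have hb' : b = i₁ ∨ b = i₂ := by
      by_contra hc; push_neg at hc; exact absurd (hsupp b hc.1 hc.2) hpb.ne'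
    have hp12 : 0 < p i₁ ∧ 0 < p i₂ := by
      rcases ha' with rfl | rfl
      · rcases hb' with rfl | rfl
        · exact absurd rfl hab
        · exact ⟨hpa, hpb⟩
      · rcases hb' with rfl | rfl
        · exact ⟨hpb, hpa⟩
        · exact absurd rfl hab
    obtain ⟨hp1, hp2⟩ := hp12
    have pairsum : ∀ f : Fin (n+1) → ℝ, (∀ i, i ≠ i₁ → i ≠ i₂ → f i = 0) →
        ∑ i, f i = f i₁ + f i₂ := by
      intro f hf
      rw [← Finset.sum_pair h12]
      symm
      refine Finset.sum_subset (Finset.subset_univ _) fun i _ hi => ?_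
      simp only [Finset.mem_insert, Finset.mem_singleton] at hi
      push_neg at hi
      exact hf i hi.1 hi.2
    set w1 := Psi (lam i₁) * p i₁ with hw1
    set w2 := Psi (lam i₂) * p i₂ with hw2
    set l1 := lam i₁ with hl1
    set l2 := lam i₂ with hl2
    have hAval : A = w1 + w2 := by
      rw [hA, pairsum _ (fun i h1 h2 => by rw [hsupp i h1 h2, mul_zero])]
    have hMval : M = w1 * l1 + w2 * l2 := by
      rw [hM, pairsum _ (fun i h1 h2 => by rw [hsupp i h1 h2, mul_zero])]
      ring
    have hSval : S = w1 * (l1 - μ)^2 + w2 * (l2 - μ)^2 := by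
      rw [hS, pairsum _ (fun i h1 h2 => by rw [hsupp i h1 h2, mul_zero])]
      ring
    have hNval : N = w1 * l1 * (l1 - μ)^2 + w2 * l2 * (l2 - μ)^2 := by
      rw [hN, pairsum _ (fun i h1 h2 => by rw [hsupp i h1 h2, mul_zero])]
      ring
    have hμ2 : μ * (w1 + w2) = w1 * l1 + w2 * l2 := by
      rw [← hAval, ← hMval, hμval]
      field_simp
    have hkey := two_point_alg w1 w2 l1 l2 μ hμ2 (by rw [← hSval]; exact hSpos.ne')
    have hμν : μ + ν = l1 + l2 := by
      rw [hνval, hNval, hSval]; exact hkey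
    refine ⟨hμν, ?_⟩
    have hP12 : (l1 - μ) * (l1 - ν) = (l2 - μ) * (l2 - ν) := by
      linear_combination (l2 - l1) * hμν
    have hSval2 : S = A * ((l1 - μ) * (l1 - ν)) := by
      rw [← hR, pairsum _ (fun i h1 h2 => by rw [hsupp i h1 h2, mul_zero]), hAval, ← hP12]
      ring
    have hc : S / A = (l1 - μ) * (l1 - ν) := by
      rw [hSval2, mul_comm, mul_div_assoc, div_self hApos.ne', mul_one]
    intro i
    by_cases h1 : i = i₁
    · right; rw [h1, hc]
    · by_cases h2 : i = i₂
      · right; rw [h2, hc, hP12]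
      · left; exact hsupp i h1 h2
  constructor
  · constructor
    · intro heq
      have hcond := hEzero.1 (hEiff.1 heq)
      have Pa : (lam a - μ) * (lam a - ν) = S / A := (hcond a).resolve_left hpa.ne'
      have Pb : (lam b - μ) * (lam b - ν) = S / A := (hcond b).resolve_left hpb.ne'
      have hab2 : lam a + lam b = μ + ν := by
        have h0 : (lam a - lam b) * ((lam a + lam b) - (μ + ν)) = 0 := by
          linear_combination Pa - Pb
        have h1 := (mul_eq_zero.1 h0).resolve_left (sub_ne_zero.mpr hlab)
        linarith [sub_eq_zero.1 h1]
      refine ⟨a, b, hab, fun i hia hib => ?_⟩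
      by_contra h0
      have hpi : 0 < p i := lt_of_le_of_ne (hp i) (Ne.symm h0)
      have Pi : (lam i - μ) * (lam i - ν) = S / A := (hcond i).resolve_left hpi.ne'
      have hlia : lam i ≠ lam a := fun h => hia (hmono.injective h)
      have hia2 : lam i + lam a = μ + ν := by
        have h0' : (lam i - lam a) * ((lam i + lam a) - (μ + ν)) = 0 := by
          linear_combination Pi - Pa
        have h1 := (mul_eq_zero.1 h0').resolve_left (sub_ne_zero.mpr hlia)
        linarith [sub_eq_zero.1 h1]
      have : lam i = lam b := by linarith
      exact hib (hmono.injective this)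
    · rintro ⟨i₁, i₂, h12, hsupp⟩
      exact hEiff.2 (hEzero.2 (key i₁ i₂ h12 hsupp).2)
  · intro _ i₁ i₂ h12 hsupp
    have := (key i₁ i₂ h12 hsupp).1
    linarith
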